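/- Let σ > 0, ν₀ > 0, M > 0 and A ≥ 0. Suppose g : ℝ³ → ℝ satisfies |g(ζ)−g(ω)| ≤ M|ζ−ω|^σ for all ζ, ω ∈ ℝ³, and suppose w : ℝ³ → ℝ satisfies w(ζ) ≥ ν₀ for all ζ and ∫_{ℝ³} g(ζ)² w(ζ) dζ ≤ A². Then sup_{ζ∈ℝ³} |g(ζ)| ≤ 2 (3/(4πν₀))^{σ/(3+2σ)} M^{3/(3+2σ)} A^{2σ/(3+2σ)}. -/

import Mathlib

open MeasureTheory Real Set
open scoped ENNReal NNReal

noncomputable section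

/-- Three-dimensional Euclidean space. -/
abbrev E3 : Type := EuclideanSpace ℝ (Fin 3)

/-- Backward exit time: `τ₋(x,ζ) = sup{t ≥ 0 : x - sζ ∈ Ω for all s ∈ [0,t)}`. -/
def tauMinus (Ω : Set E3) (x ζ : E3) : ℝ :=
  sSup {t : ℝ | 0 ≤ t ∧ ∀ s ∈ Set.Ico (0 : ℝ) t, x - s • ζ ∈ Ω}

/-- Backward exit point: `p(x,ζ) = x - τ₋(x,ζ) ζ`. -/
def exitPoint (Ω : Set E3) (x ζ : E3) : E3 := x - tauMinus Ω x ζ • ζ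

/-- The incoming boundary set `Γ₋`. -/
def GammaMinus (Ω : Set E3) : Set (E3 × E3) :=
  {z | z.1 ∈ frontier Ω ∧ ∃ t : ℝ, 0 < t ∧ z.1 + t • z.2 ∈ Ω}

/-- Collision frequency `ν(ζ) = β₀ ∫ e^{-|η|²} |η-ζ|^γ dη`. -/
def nu (γ β₀ : ℝ) (ζ : E3) : ℝ :=
  β₀ * ∫ η : E3, Real.exp (-‖η‖ ^ 2) * ‖η - ζ‖ ^ γ

/-- The Grad-type pointwise bound (1.9) on the collision kernel `k`. -/
def KernelBound (γ δ C₁ : ℝ) (k : E3 → E3 → ℝ) : Prop :=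
  ∀ ζ ζs : E3, ζ ≠ ζs →
    |k ζ ζs| ≤ C₁ * ‖ζ - ζs‖⁻¹ * (1 + ‖ζ‖ + ‖ζs‖) ^ (-(1 - γ)) *
      Real.exp (-((1 - δ) / 4) *
        (‖ζ - ζs‖ ^ 2 + ((‖ζ‖ ^ 2 - ‖ζs‖ ^ 2) / ‖ζ - ζs‖) ^ 2))

/-- The gradient bound (1.10) on the collision kernel `k` (first-variable gradient),
together with differentiability of `k (·, ζ⁎)`. -/
def KernelGradBound (γ δ C₂ : ℝ) (k : E3 → E3 → ℝ) : Prop :=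
  (∀ ζs : E3, Differentiable ℝ fun ζ => k ζ ζs) ∧
  ∀ ζ ζs : E3, ζ ≠ ζs →
    ‖fderiv ℝ (fun w => k w ζs) ζ‖ ≤
      C₂ * (1 + ‖ζ‖) * (‖ζ - ζs‖ ^ 2)⁻¹ * (1 + ‖ζ‖ + ‖ζs‖) ^ (-(1 - γ)) *
        Real.exp (-((1 - δ) / 4) *
          (‖ζ - ζs‖ ^ 2 + ((‖ζ‖ ^ 2 - ‖ζs‖ ^ 2) / ‖ζ - ζs‖) ^ 2))

/-- The integral operator `K(f)(x,ζ) = ∫ k(ζ,ζ⁎) f(x,ζ⁎) dζ⁎`. -/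
def Kop (k : E3 → E3 → ℝ) (f : E3 → E3 → ℝ) (x ζ : E3) : ℝ :=
  ∫ ζs : E3, k ζ ζs * f x ζs

/-- `f` is a mild solution of the stationary linearized Boltzmann equation:
it satisfies the exponential (Duhamel) integral form along backward characteristics,
a.e. on `Ω × ℝ³`. -/
def MildSolution (Ω : Set E3) (γ β₀ : ℝ) (k f : E3 → E3 → ℝ) : Prop :=
  ∀ᵐ z : E3 × E3, z.1 ∈ Ω →
    f z.1 z.2 =
      f (exitPoint Ω z.1 z.2) z.2 * Real.exp (-(nu γ β₀ z.2) * tauMinus Ω z.1 z.2) +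
      ∫ s in (0 : ℝ)..(tauMinus Ω z.1 z.2),
        Real.exp (-(nu γ β₀ z.2) * s) * Kop k f (z.1 - s • z.2) z.2

/-- The function `G` from the mixture lemma, written as an integral over space
and speed:
`G(x₀,ζ) = ∫₀^∞ ∫_Ω k(ζ, ρ(x₀−y)/|x₀−y|) e^{−ν(ρ)|x₀−y|/ρ} K(f)(y, ρ(x₀−y)/|x₀−y|) ρ|x₀−y|⁻² dy dρ`. -/
def Gfun (Ω : Set E3) (γ β₀ : ℝ) (k f : E3 → E3 → ℝ) (x₀ ζ : E3) : ℝ :=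
  ∫ ρ in Set.Ioi (0 : ℝ), ∫ y in Ω,
    k ζ ((ρ / ‖x₀ - y‖) • (x₀ - y)) *
      Real.exp (-(nu γ β₀ ((ρ / ‖x₀ - y‖) • (x₀ - y))) * (‖x₀ - y‖ / ρ)) *
      Kop k f y ((ρ / ‖x₀ - y‖) • (x₀ - y)) * (ρ / ‖x₀ - y‖ ^ 2)

/-- The term `III(x,ζ) = ∫₀^{τ₋(x,ζ)} e^{−ν(ζ)s} G(x−ζs, ζ) ds`. -/
def IIIfun (Ω : Set E3) (γ β₀ : ℝ) (k f : E3 → E3 → ℝ) (x ζ : E3) : ℝ :=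
  ∫ s in (0 : ℝ)..(tauMinus Ω x ζ),
    Real.exp (-(nu γ β₀ ζ) * s) * Gfun Ω γ β₀ k f (x - s • ζ) ζ

/-- The damped transport of boundary data: `I(x,ζ) = g(p(x,ζ),ζ) e^{−ν(ζ)τ₋(x,ζ)}`. -/
def Ifun (Ω : Set E3) (γ β₀ : ℝ) (g : E3 → E3 → ℝ) (x ζ : E3) : ℝ :=
  g (exitPoint Ω x ζ) ζ * Real.exp (-(nu γ β₀ ζ) * tauMinus Ω x ζ)

/-- The twice-iterated boundary term
`II(x,ζ) = ∫₀^{τ₋(x,ζ)} ∫ e^{−ν(ζ)s} k(ζ,ζ′) e^{−ν(ζ′)τ₋(x−ζs,ζ′)} g(p(x−ζs,ζ′),ζ′) dζ′ ds`. -/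
def IIfun (Ω : Set E3) (γ β₀ : ℝ) (k g : E3 → E3 → ℝ) (x ζ : E3) : ℝ :=
  ∫ s in (0 : ℝ)..(tauMinus Ω x ζ), ∫ ζ' : E3,
    Real.exp (-(nu γ β₀ ζ) * s) * k ζ ζ' *
      Real.exp (-(nu γ β₀ ζ') * tauMinus Ω (x - s • ζ) ζ') *
      g (exitPoint Ω (x - s • ζ) ζ') ζ'

/-- Interpolation between a Hölder bound and a weighted `L²` bound gives a
pointwise bound (the estimate used in Section 5, with constant
`C₁₂ = 2(3/(4πν₀))^{σ/(3+2σ)}`). -/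
theorem stmt_5 (σ ν₀ M A : ℝ) (hσ : 0 < σ) (hν₀ : 0 < ν₀) (hM : 0 < M) (hA : 0 ≤ A)
    (g w : E3 → ℝ)
    (hg : ∀ ζ ω : E3, |g ζ - g ω| ≤ M * ‖ζ - ω‖ ^ σ)
    (hw : ∀ ζ : E3, ν₀ ≤ w ζ)
    (hint : (∫⁻ ζ : E3, ENNReal.ofReal (g ζ ^ 2 * w ζ)) ≤ ENNReal.ofReal (A ^ 2)) :
    ∀ ζ : E3, |g ζ| ≤
      2 * (3 / (4 * π * ν₀)) ^ (σ / (3 + 2 * σ)) * M ^ (3 / (3 + 2 * σ)) *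
        A ^ (2 * σ / (3 + 2 * σ)) := by
  intro ζ₀
  have hπ := Real.pi_pos
  have hTnn : (0:ℝ) ≤ 2 * (3 / (4 * π * ν₀)) ^ (σ / (3 + 2 * σ)) * M ^ (3 / (3 + 2 * σ)) *
      A ^ (2 * σ / (3 + 2 * σ)) := by positivity
  rcases (abs_nonneg (g ζ₀)).eq_or_lt with h0 | ha0
  · rw [← h0]; exact hTnn
  set a := |g ζ₀| with ha
  set r := (a / (2*M)) ^ σ⁻¹ with hrdef
  have hrpos : 0 < r := Real.rpow_pos_of_pos (by positivity) _
  have hrσ : r ^ σ = a / (2*M) := Real.rpow_inv_rpow (by positivity) hσ.ne'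
  -- pointwise lower bound on the ball
  have hpt : ∀ ζ ∈ Metric.ball ζ₀ r, (a/2)^2 * ν₀ ≤ g ζ^2 * w ζ := by
    intro ζ hζ
    have hd : ‖ζ₀ - ζ‖ ≤ r := by
      rw [Metric.mem_ball, dist_comm, dist_eq_norm] at hζ
      exact hζ.le
    have h1 : |g ζ₀ - g ζ| ≤ M * r ^ σ :=
      (hg ζ₀ ζ).trans (mul_le_mul_of_nonneg_left
        (Real.rpow_le_rpow (norm_nonneg _) hd hσ.le) hM.le)
    rw [hrσ] at h1
    have hMa : M * (a / (2*M)) = a/2 := by field_simp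
    rw [hMa] at h1
    have h2 := abs_sub_abs_le_abs_sub (g ζ₀) (g ζ)
    have hhalf : a/2 ≤ |g ζ| := by linarith
    have h3 : (a/2)^2 ≤ g ζ^2 := by
      rw [← sq_abs (g ζ)]
      exact pow_le_pow_left₀ (by positivity) hhalf 2
    exact mul_le_mul h3 (hw ζ) hν₀.le (sq_nonneg _)
  -- volume of the ball
  have hΓ : Real.Gamma ((3:ℝ)/2 + 1) = 3/4 * Real.sqrt π := by
    rw [Real.Gamma_add_one (by norm_num),
      show (3:ℝ)/2 = 1/2 + 1 by norm_num,
      Real.Gamma_add_one (by norm_num), Real.Gamma_one_half_eq]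
    ring
  have hsπ : Real.sqrt π ^ 3 = π * Real.sqrt π := by
    rw [pow_succ, Real.sq_sqrt hπ.le]
  have hvol : volume (Metric.ball ζ₀ r) = ENNReal.ofReal (r^3 * (4/3*π)) := by
    rw [show (Metric.ball ζ₀ r : Set E3) = Metric.ball (ζ₀ : EuclideanSpace ℝ (Fin 3)) r from rfl,
      EuclideanSpace.volume_ball]
    simp only [Fintype.card_fin, Nat.cast_ofNat]
    rw [hΓ, hsπ, ENNReal.ofReal_mul (by positivity), ENNReal.ofReal_pow hrpos.le]
    congr 2
    rw [div_eq_iff (show (3:ℝ)/4 * Real.sqrt π ≠ 0 by positivity)]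
    ring
  -- the integral bound
  have hball : ENNReal.ofReal ((a/2)^2 * ν₀ * (r^3 * (4/3*π))) ≤ ENNReal.ofReal (A^2) := by
    rw [ENNReal.ofReal_mul (by positivity), ← hvol]
    calc ENNReal.ofReal ((a/2)^2*ν₀) * volume (Metric.ball ζ₀ r)
        = ∫⁻ ζ, (Metric.ball ζ₀ r).indicator (fun _ => ENNReal.ofReal ((a/2)^2*ν₀)) ζ := by
          rw [lintegral_indicator measurableSet_ball, setLIntegral_const]
      _ ≤ ∫⁻ ζ, ENNReal.ofReal (g ζ^2 * w ζ) := by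
          refine lintegral_mono fun ζ => ?_
          by_cases hζ : ζ ∈ Metric.ball ζ₀ r
          · rw [Set.indicator_of_mem hζ]
            exact ENNReal.ofReal_le_ofReal (hpt ζ hζ)
          · rw [Set.indicator_of_notMem hζ]; exact zero_le
      _ ≤ _ := hint
  have hreal : (a/2)^2 * ν₀ * (r^3 * (4/3*π)) ≤ A^2 :=
    (ENNReal.ofReal_le_ofReal_iff (by positivity)).mp hball
  have key : a^2 * r^3 ≤ A^2 * (3/(π*ν₀)) := by
    calc a^2*r^3 = (a/2)^2 * ν₀ * (r^3 * (4/3*π)) * (3/(π*ν₀)) := by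
          field_simp; ring
      _ ≤ A^2 * (3/(π*ν₀)) :=
          mul_le_mul_of_nonneg_right hreal (by positivity)
  -- algebra with rpow
  have h3σ : (0:ℝ) < 3 + 2*σ := by linarith
  have haval : a = 2*M*r^σ := by rw [hrσ]; field_simp
  have hap : a ^ ((3+2*σ)/σ) = (2*M)^((3:ℝ)/σ) * (a^2 * r^3) := by
    rw [show (3+2*σ)/σ = 2 + 3/σ by field_simp; try ring, Real.rpow_add ha0,
      show ((2:ℝ):ℝ) = ((2:ℕ):ℝ) by norm_num, Real.rpow_natCast]
    have e2 : a ^ ((3:ℝ)/σ) = (2*M)^((3:ℝ)/σ) * r^(3:ℕ) := by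
      conv_lhs => rw [haval]
      rw [Real.mul_rpow (by positivity) (Real.rpow_nonneg hrpos.le σ),
        ← Real.rpow_natCast r 3, ← Real.rpow_mul hrpos.le]
      congr 2
      field_simp
      norm_num
    rw [e2]; ring
  have hfin : a = (a ^ ((3+2*σ)/σ)) ^ (σ/(3+2*σ)) := by
    rw [← Real.rpow_mul ha0.le,
      show (3+2*σ)/σ * (σ/(3+2*σ)) = 1 by field_simp, Real.rpow_one]
  have hC : (2*M)^((3:ℝ)/σ) * (A^2 * (3/(π*ν₀))) =
      2^((3+2*σ)/σ) * ((3/(4*π*ν₀)) * (M^((3:ℝ)/σ) * A^2)) := by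
    rw [Real.mul_rpow (by norm_num) hM.le,
      show (3+2*σ)/σ = 2 + 3/σ by field_simp; try ring,
      Real.rpow_add (by norm_num : (0:ℝ) < 2),
      show ((2:ℝ):ℝ) = ((2:ℕ):ℝ) by norm_num, Real.rpow_natCast]
    field_simp
    try ring
  calc a = (a ^ ((3+2*σ)/σ)) ^ (σ/(3+2*σ)) := hfin
    _ ≤ ((2*M)^((3:ℝ)/σ) * (A^2 * (3/(π*ν₀)))) ^ (σ/(3+2*σ)) := by
        apply Real.rpow_le_rpow (Real.rpow_nonneg ha0.le _) _ (by positivity)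
        rw [hap]
        exact mul_le_mul_of_nonneg_left key (Real.rpow_nonneg (by positivity) _)
    _ = 2 * (3 / (4 * π * ν₀)) ^ (σ / (3 + 2 * σ)) * M ^ (3 / (3 + 2 * σ)) *
        A ^ (2 * σ / (3 + 2 * σ)) := by
        rw [hC, Real.mul_rpow (by positivity) (by positivity),
          Real.mul_rpow (by positivity) (by positivity),
          Real.mul_rpow (by positivity) (sq_nonneg A),
          ← Real.rpow_natCast A 2, ← Real.rpow_mul hA,
          ← Real.rpow_mul (by norm_num : (0:ℝ) ≤ 2),
          ← Real.rpow_mul hM.le,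
          show (3+2*σ)/σ * (σ/(3+2*σ)) = 1 by field_simp,
          Real.rpow_one,
          show (3:ℝ)/σ * (σ/(3+2*σ)) = 3/(3+2*σ) by field_simp; try ring,
          show ((2:ℕ):ℝ) * (σ/(3+2*σ)) = 2*σ/(3+2*σ) by push_cast; ring]
        ring
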